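/- If W is a P_5-witness structure of the graph G = G(Q,S) with W(p_1) = {v} and W(p_5) = {w}, then {u_1, u_2, q*} ⊆ W(p_2), {S_1,...,S_n} ⊆ W(p_3) and {S_1',...,S_n'} ⊆ W(p_4). -/

import Mathlib

/-- `W` is an `H`-witness structure of `G`: a family of pairwise disjoint nonempty
connected subsets of `V(G)` covering `V(G)` such that distinct `h₁ h₂` are adjacent in `H`
iff there is an edge of `G` between `W h₁` and `W h₂`. -/
def IsWitnessStructure {V U : Type*} (G : SimpleGraph V) (H : SimpleGraph U)
    (W : U → Set V) : Prop :=
  (∀ h, (W h).Nonempty) ∧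
  (∀ h₁ h₂, h₁ ≠ h₂ → Disjoint (W h₁) (W h₂)) ∧
  (⋃ h, W h) = Set.univ ∧
  (∀ h, (G.induce (W h)).Connected) ∧
  (∀ h₁ h₂, h₁ ≠ h₂ → ((∃ a ∈ W h₁, ∃ b ∈ W h₂, G.Adj a b) ↔ H.Adj h₁ h₂))

/-- `G` contains `H` as a contraction. -/
def ContainsAsContraction {V U : Type*} (G : SimpleGraph V) (H : SimpleGraph U) : Prop :=
  ∃ W : U → Set V, IsWitnessStructure G H W

/-- Raw vertex names for the graph `G(Q,S)`: elements `q_i`, hyperedges `S_j`,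
copies `S_j'`, subdivision vertices `q^i_j`, and special vertices `q*`, `u₁`, `u₂`, `v`, `w`. -/
inductive HVertex (m n : ℕ) : Type
  | elt : Fin m → HVertex m n
  | hyp : Fin n → HVertex m n
  | copy : Fin n → HVertex m n
  | sub : Fin m → Fin n → HVertex m n
  | qstar : HVertex m n
  | u1 : HVertex m n
  | u2 : HVertex m n
  | v : HVertex m n
  | w : HVertex m n

/-- A raw vertex name is an actual vertex of `G(Q,S)`: the subdivision vertex `q^i_j`
exists only when `q_i ∈ S_j`. -/
def HVertex.OK {m n : ℕ} (S : Fin n → Set (Fin m)) : HVertex m n → Prop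
  | .sub i j => i ∈ S j
  | _ => True

/-- The vertex set of `G(Q,S)`. -/
def GVertex {m n : ℕ} (S : Fin n → Set (Fin m)) : Type := {x : HVertex m n // x.OK S}

/-- The (asymmetrically listed) edges of `G(Q,S)`:
`q^i_j q_i`, `q^i_j S_j`, `q_i S_j'` (for `q_i ∈ S_j`), `S_j S_k'` (all `j,k`),
`q* u₁`, `q* u₂`, `q* q^i_j`, `u₁ S_j`, `u₂ S_j`, `u₁ v`, `u₂ v`, `w S_j'`. -/
def baseAdj {m n : ℕ} (S : Fin n → Set (Fin m)) : HVertex m n → HVertex m n → Prop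
  | .sub i _, .elt i' => i = i'
  | .sub _ j, .hyp j' => j = j'
  | .elt i, .copy j => i ∈ S j
  | .hyp _, .copy _ => True
  | .qstar, .u1 => True
  | .qstar, .u2 => True
  | .qstar, .sub _ _ => True
  | .u1, .hyp _ => True
  | .u2, .hyp _ => True
  | .u1, .v => True
  | .u2, .v => True
  | .w, .copy _ => True
  | _, _ => False

/-- The graph `G = G(Q,S)`. -/
def GQS {m n : ℕ} (S : Fin n → Set (Fin m)) : SimpleGraph (GVertex S) :=
  SimpleGraph.fromRel (fun a b => baseAdj S a.1 b.1)


section Aux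
variable {m n : ℕ} {S : Fin n → Set (Fin m)}

lemma u1_nbrs (x : GVertex S)
    (h : (GQS S).Adj ⟨.u1, trivial⟩ x) :
    x.1 = .qstar ∨ (∃ j, x.1 = .hyp j) ∨ x.1 = .v := by
  obtain ⟨hne, h | h⟩ := h <;> rcases x with ⟨x, hx⟩ <;>
    cases x <;> simp_all [baseAdj]

lemma adj_of_base {a b : GVertex S} (hne : a ≠ b) (h : baseAdj S a.1 b.1) :
    (GQS S).Adj a b := ⟨hne, Or.inl h⟩

lemma mk_ne {a b : HVertex m n} {ha : a.OK S} {hb : b.OK S} (h : a = b → False) :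
    (⟨a, ha⟩ : GVertex S) ≠ ⟨b, hb⟩ :=
  fun he => h (congrArg (fun z : GVertex S => z.1) he)

lemma fin5_one {k : Fin 5} (h0 : k ≠ 0) (h2 : k ≠ 2) (h3 : k ≠ 3) (h4 : k ≠ 4) : k = 1 := by
  fin_cases k <;> simp_all

end Aux

theorem stmt_12 {m n : ℕ} (S : Fin n → Set (Fin m)) (hn : 2 ≤ n)
    (hSne : ∀ j, (S j).Nonempty) (hSlast : S ⟨n - 1, by omega⟩ = Set.univ) (W : Fin 5 → Set (GVertex S))
    (hW : IsWitnessStructure (GQS S) (SimpleGraph.pathGraph 5) W)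
    (h1 : W 0 = {(⟨.v, trivial⟩ : GVertex S)})
    (h5 : W 4 = {(⟨.w, trivial⟩ : GVertex S)}) :
    (⟨.u1, trivial⟩ : GVertex S) ∈ W 1 ∧
    (⟨.u2, trivial⟩ : GVertex S) ∈ W 1 ∧
    (⟨.qstar, trivial⟩ : GVertex S) ∈ W 1 ∧
    (∀ j : Fin n, (⟨.hyp j, trivial⟩ : GVertex S) ∈ W 2) ∧
    (∀ j : Fin n, (⟨.copy j, trivial⟩ : GVertex S) ∈ W 3) := by
  obtain ⟨hNe, hdisj, hcover, hconn, hadj⟩ := hW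
  have hmem : ∀ x : GVertex S, ∃ k, x ∈ W k := by
    intro x
    have : x ∈ ⋃ h, W h := hcover ▸ Set.mem_univ x
    exact Set.mem_iUnion.mp this
  have huniq : ∀ {x : GVertex S} {k l : Fin 5}, x ∈ W k → x ∈ W l → k = l := by
    intro x k l hk hl
    by_contra hkl
    exact (hdisj k l hkl).le_bot ⟨hk, hl⟩
  have hloc : ∀ {a b : GVertex S} {k l : Fin 5}, a ∈ W k → b ∈ W l → k ≠ l →
      (GQS S).Adj a b → (SimpleGraph.pathGraph 5).Adj k l := by
    intro a b k l ha hb hkl hab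
    exact (hadj k l hkl).mp ⟨a, ha, b, hb, hab⟩
  have hv0 : (⟨.v, trivial⟩ : GVertex S) ∈ W 0 := by rw [h1]; rfl
  have hw4 : (⟨.w, trivial⟩ : GVertex S) ∈ W 4 := by rw [h5]; rfl
  -- u1, u2 ∈ W 1
  have hu : ∀ (u : GVertex S), u.1 = .u1 ∨ u.1 = .u2 → u ∈ W 1 := by
    intro u hu1
    obtain ⟨k, hk⟩ := hmem u
    have hne0 : k ≠ 0 := by
      intro h
      rw [h, h1] at hk; replace hk := Set.mem_singleton_iff.mp hk
      rcases hu1 with h' | h' <;> (subst hk; simp at h')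
    have hadjv : (GQS S).Adj u ⟨.v, trivial⟩ := by
      refine adj_of_base ?_ ?_
      · intro h; rcases hu1 with h' | h' <;> (rw [h] at h'; simp at h')
      · rcases hu1 with h' | h' <;> rw [h'] <;> trivial
    have hp := hloc hk hv0 hne0 hadjv
    rw [SimpleGraph.pathGraph_adj] at hp
    have hk1 : k = 1 := by
      apply Fin.ext
      simp only [Fin.val_zero, Fin.val_one] at hp ⊢
      omega
    exact hk1 ▸ hk
  have hu1W : (⟨.u1, trivial⟩ : GVertex S) ∈ W 1 := hu _ (Or.inl rfl)
  have hu2W : (⟨.u2, trivial⟩ : GVertex S) ∈ W 1 := hu _ (Or.inr rfl)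
  -- copies in W 3
  have hcopy : ∀ j : Fin n, (⟨.copy j, trivial⟩ : GVertex S) ∈ W 3 := by
    intro j
    obtain ⟨k, hk⟩ := hmem ⟨.copy j, trivial⟩
    have hne4 : (4 : Fin 5) ≠ k := by
      intro h
      rw [← h, h5] at hk; replace hk := Set.mem_singleton_iff.mp hk
      exact by cases (congrArg (fun z : GVertex S => z.1) hk)
    have hwadj : (GQS S).Adj (⟨.w, trivial⟩ : GVertex S) ⟨.copy j, trivial⟩ :=
      adj_of_base (mk_ne fun h => by cases h) trivial
    have hp := hloc hw4 hk hne4 hwadj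
    rw [SimpleGraph.pathGraph_adj] at hp
    have hlt := k.isLt
    have hk3 : k = 3 := by
      apply Fin.ext
      simp only [show ((3 : Fin 5) : ℕ) = 3 from rfl, show ((4 : Fin 5) : ℕ) = 4 from rfl] at hp ⊢
      omega
    exact hk3 ▸ hk
  -- hyperedges in W 2
  have hhyp : ∀ j : Fin n, (⟨.hyp j, trivial⟩ : GVertex S) ∈ W 2 := by
    intro j
    obtain ⟨k, hk⟩ := hmem ⟨.hyp j, trivial⟩
    have hne4 : k ≠ 4 := by
      intro h; rw [h, h5] at hk; replace hk := Set.mem_singleton_iff.mp hk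
      exact by cases (congrArg (fun z : GVertex S => z.1) hk)
    have hne3 : k ≠ 3 := by
      intro h
      subst h
      have hadj31 := hloc hk hu1W (by decide)
        (SimpleGraph.Adj.symm (adj_of_base (mk_ne fun h => by cases h) trivial))
      rw [SimpleGraph.pathGraph_adj] at hadj31
      simp only [show ((3 : Fin 5) : ℕ) = 3 from rfl, Fin.val_one] at hadj31
      omega
    have hc := hcopy ⟨0, by omega⟩
    have hp := hloc hk hc hne3 (adj_of_base (mk_ne fun h => by cases h) trivial)
    rw [SimpleGraph.pathGraph_adj] at hp
    have h4 : (k : ℕ) ≠ 4 := by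
      intro h; exact hne4 (Fin.ext (by rw [h]; rfl))
    have hk2 : k = 2 := by
      apply Fin.ext
      simp only [show ((2 : Fin 5) : ℕ) = 2 from rfl, show ((3 : Fin 5) : ℕ) = 3 from rfl] at hp ⊢
      omega
    exact hk2 ▸ hk
  -- qstar in W 1
  have hq : (⟨.qstar, trivial⟩ : GVertex S) ∈ W 1 := by
    obtain ⟨k, hk⟩ := hmem ⟨.qstar, trivial⟩
    have hne0 : k ≠ 0 := by
      intro h; rw [h, h1] at hk; replace hk := Set.mem_singleton_iff.mp hk
      exact by cases (congrArg (fun z : GVertex S => z.1) hk)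
    have hne4 : k ≠ 4 := by
      intro h; rw [h, h5] at hk; replace hk := Set.mem_singleton_iff.mp hk
      exact by cases (congrArg (fun z : GVertex S => z.1) hk)
    have hne3 : k ≠ 3 := by
      intro h
      subst h
      have hadj31 := hloc hk hu1W (by decide)
        (adj_of_base (mk_ne fun h => by cases h) trivial)
      rw [SimpleGraph.pathGraph_adj] at hadj31
      simp only [show ((3 : Fin 5) : ℕ) = 3 from rfl, Fin.val_one] at hadj31
      omega
    have hne2 : k ≠ 2 := by
      intro h
      subst h
      have hcon := hconn 1
      have hreach := hcon.preconnected ⟨⟨.u1, trivial⟩, hu1W⟩ ⟨⟨.u2, trivial⟩, hu2W⟩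
      obtain ⟨p⟩ := hreach
      have hne' : (⟨⟨.u1, trivial⟩, hu1W⟩ : W 1) ≠ ⟨⟨.u2, trivial⟩, hu2W⟩ := by
        intro h
        exact by cases (congrArg (fun z : W 1 => z.1.1) h)
      obtain ⟨y, hadj', q, rfl⟩ :=
        SimpleGraph.Walk.not_nil_iff.mp (SimpleGraph.Walk.not_nil_of_ne (p := p) hne')
      have hGadj : (GQS S).Adj ⟨.u1, trivial⟩ y.1 := hadj'
      have hy1 : (y.1 : GVertex S) ∈ W 1 := y.2
      rcases u1_nbrs y.1 hGadj with h' | ⟨j, h'⟩ | h'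
      · have : y.1 = (⟨.qstar, trivial⟩ : GVertex S) := Subtype.ext h'
        rw [this] at hy1
        exact absurd (huniq hy1 hk) (by decide)
      · have : y.1 = (⟨.hyp j, trivial⟩ : GVertex S) := Subtype.ext h'
        rw [this] at hy1
        exact absurd (huniq hy1 (hhyp j)) (by decide)
      · have : y.1 = (⟨.v, trivial⟩ : GVertex S) := Subtype.ext h'
        rw [this] at hy1
        exact absurd (huniq hy1 hv0) (by decide)
    have hk1 : k = 1 := fin5_one hne0 hne2 hne3 hne4
    exact hk1 ▸ hk
  exact ⟨hu1W, hu2W, hq, hhyp, hcopy⟩
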